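/- Let B_X be the open unit ball of a complex Banach space X and F : B_X → closure(D^n) holomorphic with homogeneous expansion F(z) = a + Σ_{s≥1} P_s(z), where P_s(z) = (1/s!) D^s F(0)(z^s). If |a_j| = ‖a‖_∞ for all j, then ‖P_s(z_0)‖_∞ ≤ 1 - ‖a‖_∞^2 for every s ≥ 1 and every z_0 ∈ ∂B_X. -/

import Mathlib

open Metric Finset

private lemma mobius_normSq (a w : ℂ) :
    Complex.normSq (1 - (starRingEnd ℂ) a * w) - Complex.normSq (w - a)
      = (1 - Complex.normSq a) * (1 - Complex.normSq w) := by
  simp only [Complex.normSq_apply, Complex.sub_re, Complex.sub_im, Complex.mul_re,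
    Complex.mul_im, Complex.one_re, Complex.one_im, Complex.conj_re, Complex.conj_im]
  ring

private lemma normSq_lt_one {z : ℂ} (h : ‖z‖ < 1) : Complex.normSq z < 1 := by
  rw [← Complex.sq_norm]
  nlinarith [norm_nonneg z]

/-- Schwarz–Pick derivative bound at the origin. -/
private lemma schwarz_pick_zero {g : ℂ → ℂ} (hd : DifferentiableOn ℂ g (ball 0 1))
    (hb : ∀ z ∈ ball (0 : ℂ) 1, ‖g z‖ ≤ 1) : ‖deriv g 0‖ ≤ 1 - ‖g 0‖ ^ 2 := by
  have h0 : (0 : ℂ) ∈ ball (0 : ℂ) 1 := by simp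
  by_cases hmax : ∃ z₁ ∈ ball (0 : ℂ) 1, ‖g z₁‖ = 1
  · obtain ⟨z₁, hz₁, hgz₁⟩ := hmax
    have hmax' : IsMaxOn (norm ∘ g) (ball (0:ℂ) 1) z₁ := by
      intro z hz
      simp only [Function.comp_apply, hgz₁]
      exact hb z hz
    have heq : Set.EqOn g (Function.const ℂ (g z₁)) (ball (0:ℂ) 1) :=
      Complex.eqOn_of_isPreconnected_of_isMaxOn_norm (convex_ball _ _).isPreconnected
        isOpen_ball hd hz₁ hmax'
    have hg0 : g 0 = g z₁ := heq h0
    have hder : deriv g 0 = 0 := by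
      have hev : g =ᶠ[nhds (0:ℂ)] Function.const ℂ (g z₁) :=
        heq.eventuallyEq_of_mem (isOpen_ball.mem_nhds h0)
      rw [hev.deriv_eq]
      exact deriv_const _ _
    rw [hder, hg0, hgz₁]
    simp
  · push_neg at hmax
    have hlt : ∀ z ∈ ball (0 : ℂ) 1, ‖g z‖ < 1 :=
      fun z hz => lt_of_le_of_ne (hb z hz) (hmax z hz)
    set α := g 0 with hα
    have hα1 : ‖α‖ < 1 := hlt 0 h0
    have hαsq : Complex.normSq α < 1 := normSq_lt_one hα1
    have hden : ∀ z ∈ ball (0 : ℂ) 1, 1 - (starRingEnd ℂ) α * g z ≠ 0 := by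
      intro z hz h
      have h1 : (starRingEnd ℂ) α * g z = 1 := by linear_combination -h
      have h2 := congrArg norm h1
      rw [norm_mul, norm_one, RCLike.norm_conj] at h2
      nlinarith [hlt z hz, norm_nonneg (g z), norm_nonneg α]
    set φ : ℂ → ℂ := fun z => (g z - α) / (1 - (starRingEnd ℂ) α * g z) with hφ
    have hφd : DifferentiableOn ℂ φ (ball 0 1) := by
      apply DifferentiableOn.div
      · exact hd.sub_const α
      · exact (differentiableOn_const _).sub ((differentiableOn_const _).mul hd)
      · exact hden
    have hmaps : Set.MapsTo φ (ball (0:ℂ) 1) (ball (0:ℂ) 1) := by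
      intro z hz
      rw [mem_ball_zero_iff]
      have hzsq : Complex.normSq (g z) < 1 := normSq_lt_one (hlt z hz)
      have hnum : ‖g z - α‖ ^ 2 < ‖1 - (starRingEnd ℂ) α * g z‖ ^ 2 := by
        rw [Complex.sq_norm, Complex.sq_norm]
        nlinarith [mobius_normSq α (g z)]
      have hd0 : (0:ℝ) < ‖1 - (starRingEnd ℂ) α * g z‖ := norm_pos_iff.2 (hden z hz)
      have : ‖g z - α‖ < ‖1 - (starRingEnd ℂ) α * g z‖ := by
        nlinarith [norm_nonneg (g z - α)]
      calc ‖φ z‖ = ‖g z - α‖ / ‖1 - (starRingEnd ℂ) α * g z‖ := norm_div _ _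
        _ < 1 := (div_lt_one hd0).2 this
    have hφ0 : φ 0 = 0 := by simp [hφ, hα]
    have hSch := Complex.norm_deriv_le_one_of_mapsTo_ball hφd
      (by rw [hφ0]; exact hmaps.mono_right ball_subset_closedBall) one_pos
    -- compute deriv φ 0
    have hgd : HasDerivAt g (deriv g 0) 0 :=
      (hd.differentiableAt (isOpen_ball.mem_nhds h0)).hasDerivAt
    have hD0 : 1 - (starRingEnd ℂ) α * g 0 ≠ 0 := hden 0 h0
    have hNd : HasDerivAt (fun z => g z - α) (deriv g 0) 0 := hgd.sub_const α
    have hDd : HasDerivAt (fun z => 1 - (starRingEnd ℂ) α * g z)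
        (0 - (starRingEnd ℂ) α * deriv g 0) 0 :=
      (hasDerivAt_const _ _).sub ((hgd.const_mul _))
    have hφder : HasDerivAt φ
        ((deriv g 0 * (1 - (starRingEnd ℂ) α * g 0) - (g 0 - α) * (0 - (starRingEnd ℂ) α * deriv g 0))
          / (1 - (starRingEnd ℂ) α * g 0) ^ 2) 0 := hNd.div hDd hD0
    have hφval : deriv φ 0 = deriv g 0 / (1 - (starRingEnd ℂ) α * α) := by
      rw [hφder.deriv, ← hα]
      have hD0' : 1 - (starRingEnd ℂ) α * α ≠ 0 := hD0
      field_simp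
      ring
    have hcc : (starRingEnd ℂ) α * α = (Complex.normSq α : ℂ) := by
      rw [mul_comm]; exact Complex.mul_conj α
    have hnormden : ‖(1 : ℂ) - (starRingEnd ℂ) α * α‖ = 1 - Complex.normSq α := by
      rw [hcc]
      rw [show (1 : ℂ) - (Complex.normSq α : ℂ) = ((1 - Complex.normSq α : ℝ) : ℂ) by push_cast; ring]
      rw [Complex.norm_real, Real.norm_eq_abs, abs_of_nonneg (by linarith)]
    have hfinal : ‖deriv g 0‖ = ‖deriv φ 0‖ * (1 - Complex.normSq α) := by
      rw [hφval, norm_div, hnormden, div_mul_cancel₀]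
      intro h
      rw [← hnormden] at h
      exact hD0 (norm_eq_zero.1 h)
    rw [hfinal]
    have hφn : ‖deriv φ 0‖ ≤ 1 := by exact hSch
    have : 1 - Complex.normSq α = 1 - ‖α‖ ^ 2 := by
      rw [Complex.sq_norm]
    rw [this]
    nlinarith [norm_nonneg (deriv φ 0), norm_nonneg α, sq_nonneg (‖α‖)]

private lemma rou_sum {s : ℕ} (hs : 1 ≤ s) (m : ℕ) :
    ∑ k ∈ range s, (Complex.exp (2 * Real.pi * Complex.I / s)) ^ (k * (m : ℕ)) =
      if s ∣ m then (s : ℂ) else 0 := by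
  have hprim := Complex.isPrimitiveRoot_exp s (by omega)
  set ω := Complex.exp (2 * Real.pi * Complex.I / s) with hω
  have hrw : ∀ k, ω ^ (k * m) = (ω ^ m) ^ k := fun k => by rw [← pow_mul, Nat.mul_comm]
  simp only [hrw]
  by_cases hdvd : s ∣ m
  · rw [if_pos hdvd, (hprim.pow_eq_one_iff_dvd m).2 hdvd]
    simp
  · rw [if_neg hdvd]
    have hne : ω ^ m ≠ 1 := fun h => hdvd ((hprim.pow_eq_one_iff_dvd m).1 h)
    rw [geom_sum_eq hne, ← pow_mul, Nat.mul_comm, pow_mul,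
      (hprim.pow_eq_one_iff_dvd s).2 dvd_rfl, one_pow]
    simp

private lemma coeff_bound {b : ℕ → ℂ} {g : ℂ → ℂ}
    (hsum : ∀ c : ℂ, ‖c‖ < 1 → HasSum (fun m : ℕ => b (m + 1) * c ^ (m + 1)) (g c - b 0))
    (hg : ∀ c : ℂ, ‖c‖ < 1 → ‖g c‖ ≤ 1) {s : ℕ} (hs : 1 ≤ s) :
    ‖b s‖ ≤ 1 - ‖b 0‖ ^ 2 := by
  classical
  have hs0 : s ≠ 0 := by omega
  -- boundedness of coefficients
  have hbdd : ∀ t : ℝ, 0 ≤ t → t < 1 → ∃ C : ℝ, ∀ m : ℕ, ‖b m‖ * t ^ m ≤ C := by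
    intro t ht0 ht1
    have hterm : Filter.Tendsto (fun m : ℕ => ‖b (m + 1) * (t : ℂ) ^ (m + 1)‖)
        Filter.atTop (nhds 0) := by
      have := (hsum (t : ℂ) (by simpa [Complex.norm_real, abs_of_nonneg ht0] using ht1)).summable
      simpa using this.tendsto_atTop_zero.norm
    obtain ⟨C, hC⟩ := hterm.bddAbove_range
    refine ⟨max C (‖b 0‖), fun m => ?_⟩
    cases m with
    | zero => simp
    | succ m =>
        have : ‖b (m + 1) * (t : ℂ) ^ (m + 1)‖ ≤ C := hC (Set.mem_range_self m)
        rw [norm_mul, norm_pow, Complex.norm_real, Real.norm_eq_abs, abs_of_nonneg ht0] at this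
        exact this.trans (le_max_left _ _)
  -- the symmetrized power series
  set coef : ℕ → ℂ := fun k => if k = 0 then b 0 else b (s * k) with hcoef
  set q : FormalMultilinearSeries ℂ ℂ ℂ :=
    fun k => ContinuousMultilinearMap.mkPiRing ℂ (Fin k) (coef k) with hq
  have hqnorm : ∀ k, ‖q k‖ = ‖coef k‖ := fun k => ContinuousMultilinearMap.norm_mkPiRing _
  have hqapp : ∀ (k : ℕ) (w : ℂ), (q k fun _ => w) = coef k * w ^ k := by
    intro k w
    rw [hq]
    rw [ContinuousMultilinearMap.mkPiRing_apply]
    simp [Finset.prod_const, mul_comm]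
  have hrad : 1 ≤ q.radius := by
    apply ENNReal.le_of_forall_nnreal_lt
    intro r hr
    have hr1 : (r : ℝ) < 1 := by exact_mod_cast hr
    set t : ℝ := (r : ℝ) ^ ((s : ℝ))⁻¹ with htdef
    have ht0 : 0 ≤ t := Real.rpow_nonneg r.coe_nonneg _
    have ht1 : t < 1 := by
      rcases eq_or_lt_of_le r.coe_nonneg with h | h
      · rw [htdef, ← h, Real.zero_rpow (by positivity)]; norm_num
      · exact Real.rpow_lt_one r.coe_nonneg hr1 (by positivity)
    have hts : t ^ s = (r : ℝ) := Real.rpow_inv_natCast_pow r.coe_nonneg hs0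
    obtain ⟨C, hC⟩ := hbdd t ht0 ht1
    apply q.le_radius_of_bound (max C ‖b 0‖)
    intro k
    rw [hqnorm]
    cases k with
    | zero => simp [hcoef]
    | succ k =>
        have hcoefk : coef (k + 1) = b (s * (k + 1)) := by simp [hcoef]
        rw [hcoefk]
        have : (r : ℝ) ^ (k + 1) = t ^ (s * (k + 1)) := by
          rw [pow_mul, hts]
        rw [this]
        exact (hC _).trans (le_max_left _ _)
  have hpos : 0 < q.radius := lt_of_lt_of_le one_pos hrad
  have hball : HasFPowerSeriesOnBall q.sum q 0 1 :=
    (q.hasFPowerSeriesOnBall hpos).mono one_pos hrad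
  have hmem : ∀ w : ℂ, ‖w‖ < 1 → w ∈ Metric.eball (0 : ℂ) 1 := by
    intro w hw
    rw [mem_eball_zero_iff, enorm_eq_nnnorm]
    exact_mod_cast (by rwa [← coe_nnnorm, NNReal.coe_lt_one] at hw : ‖w‖₊ < 1)
  have hHsum : ∀ w : ℂ, ‖w‖ < 1 → HasSum (fun k => coef k * w ^ k) (q.sum w) := by
    intro w hw
    have := hball.hasSum (hmem w hw)
    simpa [hqapp] using this
  -- value at 0
  have hH0 : q.sum 0 = b 0 := by
    have h1 := hHsum 0 (by norm_num)
    have h2 : (fun k : ℕ => coef k * (0:ℂ) ^ k) = fun k => if k = 0 then b 0 else 0 := by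
      funext k
      cases k with
      | zero => simp [hcoef]
      | succ k => simp
    rw [h2] at h1
    exact h1.unique (hasSum_ite_eq 0 (b 0))
  have hderiv : deriv q.sum 0 = b s := by
    rw [hball.hasFPowerSeriesAt.deriv, hqapp 1 1]
    simp [hcoef]
  have hHbd : ∀ w ∈ ball (0:ℂ) 1, ‖q.sum w‖ ≤ 1 := by
    intro w hw
    rw [mem_ball_zero_iff] at hw
    obtain ⟨c, hcs, hc1⟩ : ∃ c : ℂ, c ^ s = w ∧ ‖c‖ < 1 := by
      by_cases hw0 : w = 0
      · exact ⟨0, by simp [hw0, zero_pow hs0], by norm_num⟩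
      · refine ⟨w ^ ((s : ℂ))⁻¹, Complex.cpow_nat_inv_pow w hs0, ?_⟩
        rw [Complex.norm_cpow_inv_nat]
        exact Real.rpow_lt_one (norm_nonneg w)
          hw (by positivity)
    set ω : ℂ := Complex.exp (2 * Real.pi * Complex.I / s) with hω
    have hωn : ∀ k : ℕ, ‖ω ^ k * c‖ < 1 := by
      intro k
      rw [norm_mul, norm_pow]
      have hω1 : ‖ω‖ = 1 := by
        rw [hω, show (2 * (Real.pi:ℂ) * Complex.I / s)
            = ((2 * Real.pi / s : ℝ) : ℂ) * Complex.I by push_cast; ring,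
          Complex.norm_exp_ofReal_mul_I]
      rw [hω1, one_pow, one_mul]; exact hc1
    have hSk : HasSum (fun m : ℕ => ∑ k ∈ range s, b (m+1) * (ω ^ k * c) ^ (m+1))
        (∑ k ∈ range s, (g (ω ^ k * c) - b 0)) :=
      hasSum_sum (fun k _ => hsum (ω ^ k * c) (hωn k))
    have hterm : (fun m : ℕ => ∑ k ∈ range s, b (m+1) * (ω ^ k * c) ^ (m+1))
        = fun m : ℕ => if s ∣ (m+1) then (s : ℂ) * (b (m+1) * c ^ (m+1)) else 0 := by
      funext m
      have hrw : ∀ k, b (m+1) * (ω ^ k * c) ^ (m+1)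
          = (b (m+1) * c ^ (m+1)) * ω ^ (k * (m+1)) := by
        intro k
        rw [mul_pow, ← pow_mul]
        ring
      simp only [hrw]
      rw [← Finset.mul_sum, hω, rou_sum hs (m+1)]
      split <;> ring
    rw [hterm] at hSk
    set ι : ℕ → ℕ := fun k => s * (k + 1) - 1 with hι
    have hinj : Function.Injective ι := by
      intro k l h
      simp only [hι] at h
      have h1 : 1 ≤ s * (k + 1) := Nat.one_le_iff_ne_zero.2 (Nat.mul_ne_zero hs0 (Nat.succ_ne_zero k))
      have h2 : 1 ≤ s * (l + 1) := Nat.one_le_iff_ne_zero.2 (Nat.mul_ne_zero hs0 (Nat.succ_ne_zero l))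
      have h3 : s * (k + 1) = s * (l + 1) := by omega
      have h4 := Nat.eq_of_mul_eq_mul_left (by omega : 0 < s) h3
      omega
    have hvan : ∀ m, m ∉ Set.range ι →
        (if s ∣ (m+1) then (s : ℂ) * (b (m+1) * c ^ (m+1)) else 0) = 0 := by
      intro m hm
      rw [if_neg]
      intro hdvd
      obtain ⟨t, ht⟩ := hdvd
      have ht1 : 1 ≤ t := by
        rcases Nat.eq_zero_or_pos t with h | h
        · rw [h, Nat.mul_zero] at ht; omega
        · exact h
      refine hm ⟨t - 1, ?_⟩
      simp only [hι]
      have h5 : t - 1 + 1 = t := by omega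
      rw [h5]
      omega
    have hcomp : (fun m : ℕ => if s ∣ (m+1) then (s : ℂ) * (b (m+1) * c ^ (m+1)) else 0) ∘ ι
        = fun k : ℕ => (s:ℂ) * (b (s*(k+1)) * c ^ (s*(k+1))) := by
      funext k
      have h1 : ι k + 1 = s * (k + 1) := by
        simp only [hι]
        have : 1 ≤ s * (k + 1) :=
          Nat.one_le_iff_ne_zero.2 (Nat.mul_ne_zero hs0 (Nat.succ_ne_zero k))
        omega
      simp only [Function.comp_apply, h1]
      rw [if_pos ⟨k+1, rfl⟩]
    have hSk2 : HasSum (fun k : ℕ => (s:ℂ) * (b (s*(k+1)) * c ^ (s*(k+1))))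
        (∑ k ∈ range s, (g (ω ^ k * c) - b 0)) := by
      rw [← hcomp]; exact (hinj.hasSum_iff hvan).2 hSk
    have hq1 := hHsum w hw
    have hq2 : HasSum (fun k : ℕ => coef (k+1) * w ^ (k+1)) (q.sum w - b 0) := by
      refine (hasSum_nat_add_iff (f := fun k : ℕ => coef k * w ^ k) 1).2 ?_
      have hsum0 : ∑ i ∈ range 1, coef i * w ^ i = b 0 := by simp [hcoef]
      rw [hsum0]
      simpa using hq1
    have hq3 : HasSum (fun k : ℕ => (s:ℂ) * (coef (k+1) * w ^ (k+1)))
        ((s:ℂ) * (q.sum w - b 0)) := hq2.mul_left _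
    have heqfun : (fun k : ℕ => (s:ℂ) * (coef (k+1) * w ^ (k+1)))
        = fun k : ℕ => (s:ℂ) * (b (s*(k+1)) * c ^ (s*(k+1))) := by
      funext k
      have h1 : coef (k+1) = b (s*(k+1)) := by simp [hcoef]
      rw [h1, ← hcs, ← pow_mul]
    rw [heqfun] at hq3
    have hkey : (s:ℂ) * (q.sum w - b 0) = ∑ k ∈ range s, (g (ω ^ k * c) - b 0) :=
      hq3.unique hSk2
    have hfin : (s:ℂ) * q.sum w = ∑ k ∈ range s, g (ω ^ k * c) := by
      have h2 : ∑ k ∈ range s, (g (ω ^ k * c) - b 0)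
          = (∑ k ∈ range s, g (ω ^ k * c)) - s * b 0 := by
        rw [Finset.sum_sub_distrib]
        simp [Finset.card_range, nsmul_eq_mul]
      rw [h2] at hkey
      linear_combination hkey
    have hle : (s:ℝ) * ‖q.sum w‖ ≤ (s:ℝ) * 1 := by
      calc (s:ℝ) * ‖q.sum w‖ = ‖(s:ℂ) * q.sum w‖ := by
            rw [norm_mul, Complex.norm_natCast]
        _ = ‖∑ k ∈ range s, g (ω ^ k * c)‖ := by rw [hfin]
        _ ≤ ∑ k ∈ range s, ‖g (ω ^ k * c)‖ := norm_sum_le _ _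
        _ ≤ ∑ k ∈ range s, 1 := Finset.sum_le_sum (fun k _ => hg _ (hωn k))
        _ = s * 1 := by simp
    have hspos : (0:ℝ) < s := by exact_mod_cast Nat.pos_of_ne_zero hs0
    exact le_of_mul_le_mul_left hle hspos
  have hdiff : DifferentiableOn ℂ q.sum (ball 0 1) := by
    intro z hz
    rw [mem_ball_zero_iff] at hz
    exact ((hball.analyticAt_of_mem (hmem z hz)).differentiableAt).differentiableWithinAt
  have hfinal := schwarz_pick_zero hdiff hHbd
  rw [hderiv, hH0] at hfinal
  exact hfinal

theorem stmt_13 {X : Type*} [NormedAddCommGroup X] [NormedSpace ℂ X] [CompleteSpace X]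
    (n : ℕ) (F : X → (Fin n → ℂ)) (a : Fin n → ℂ) (P : ℕ → X → (Fin n → ℂ))
    (hF : DifferentiableOn ℂ F (ball (0 : X) 1))
    (hexp : ∀ z ∈ ball (0 : X) 1, HasSum (fun s : ℕ => P (s + 1) z) (F z - a))
    (hhom : ∀ s : ℕ, 1 ≤ s → ∀ (c : ℂ) (z : X), P s (c • z) = c ^ s • P s z)
    (hbd : ∀ z ∈ ball (0 : X) 1, ‖F z‖ ≤ 1)
    (ha : ∀ j : Fin n, ‖a j‖ = ‖a‖) :
    ∀ s : ℕ, 1 ≤ s → ∀ z₀ : X, ‖z₀‖ = 1 → ‖P s z₀‖ ≤ 1 - ‖a‖ ^ 2 := by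
  intro s hs z₀ hz₀
  have h0 : (0 : X) ∈ ball (0 : X) 1 := by simp
  -- F 0 = a
  have hF0 : F 0 = a := by
    have h1 := hexp 0 h0
    have h2 : (fun m : ℕ => P (m + 1) (0 : X)) = fun _ => (0 : Fin n → ℂ) := by
      funext m
      have := hhom (m + 1) (by omega) 0 (0 : X)
      rw [zero_smul] at this
      rw [this, zero_pow (by omega), zero_smul]
    rw [h2] at h1
    have h3 := h1.unique hasSum_zero
    exact sub_eq_zero.1 h3
  have hanorm : ‖a‖ ≤ 1 := by rw [← hF0]; exact hbd 0 h0
  have hnonneg : (0 : ℝ) ≤ 1 - ‖a‖ ^ 2 := by nlinarith [norm_nonneg a]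
  rw [pi_norm_le_iff_of_nonneg hnonneg]
  intro j
  set b : ℕ → ℂ := fun m => if m = 0 then a j else P m z₀ j with hb
  set g : ℂ → ℂ := fun c => F (c • z₀) j with hg
  have hmem : ∀ c : ℂ, ‖c‖ < 1 → c • z₀ ∈ ball (0 : X) 1 := by
    intro c hc
    rw [mem_ball_zero_iff, norm_smul, hz₀, mul_one]
    exact hc
  have hsum : ∀ c : ℂ, ‖c‖ < 1 → HasSum (fun m : ℕ => b (m + 1) * c ^ (m + 1)) (g c - b 0) := by
    intro c hc
    have h1 := hexp (c • z₀) (hmem c hc)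
    have h2 := Pi.hasSum.1 h1 j
    have h3 : (fun m : ℕ => P (m + 1) (c • z₀) j) = fun m : ℕ => b (m + 1) * c ^ (m + 1) := by
      funext m
      rw [hhom (m + 1) (by omega) c z₀]
      simp [hb, mul_comm]
    rw [h3] at h2
    simpa [hb, hg] using h2
  have hgbd : ∀ c : ℂ, ‖c‖ < 1 → ‖g c‖ ≤ 1 := by
    intro c hc
    exact (norm_le_pi_norm _ j).trans (hbd _ (hmem c hc))
  have := coeff_bound hsum hgbd hs
  have hbs : b s = P s z₀ j := by simp [hb, Nat.one_le_iff_ne_zero.1 hs]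
  have hb0 : b 0 = a j := by simp [hb]
  rw [hbs, hb0, ha j] at this
  exact this
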